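/- Let (f_t) be a W₁-geodesic on a graph G between finitely supported f₀ and f₁. For 0 ≤ s ≤ t ≤ 1, if an edge (x,y) is oriented x→y in the W₁-orientation with respect to f_s, f_t, then it is also oriented x→y in the W₁-orientation with respect to f₀, f₁. -/

import Mathlib

open scoped BigOperators Classical

noncomputable section

variable {V : Type*}

/-- π is a coupling of the finitely supported distributions f₀ and f₁. -/
def IsCoupling (f₀ f₁ : V →₀ ℝ) (π : V × V →₀ ℝ) : Prop :=
  (∀ p, 0 ≤ π p) ∧
    (∀ x, (π.sum fun p v => if p.1 = x then v else 0) = f₀ x) ∧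
    (∀ y, (π.sum fun p v => if p.2 = y then v else 0) = f₁ y)

/-- Transport cost of a coupling, for the graph distance of G. -/
def gcost (G : SimpleGraph V) (π : V × V →₀ ℝ) : ℝ :=
  π.sum fun p v => (G.dist p.1 p.2 : ℝ) * v

/-- π is a W₁-optimal coupling of f₀ and f₁ on the graph G. -/
def IsOptimalCoupling (G : SimpleGraph V) (f₀ f₁ : V →₀ ℝ) (π : V × V →₀ ℝ) : Prop :=
  IsCoupling f₀ f₁ π ∧ ∀ π', IsCoupling f₀ f₁ π' → gcost G π ≤ gcost G π'

/-- C(f₀,f₁): union of the supports of all W₁-optimal couplings. -/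
def commonSupport (G : SimpleGraph V) (f₀ f₁ : V →₀ ℝ) : Set (V × V) :=
  {p | ∃ π, IsOptimalCoupling G f₀ f₁ π ∧ 0 < π p}

/-- f is a (finitely supported) probability distribution. -/
def IsProb (f : V →₀ ℝ) : Prop := (∀ x, 0 ≤ f x) ∧ (f.sum fun _ v => v) = 1

/-- γ(0),…,γ(n) is a geodesic of G of length n. -/
def IsGeodesic (G : SimpleGraph V) (γ : ℕ → V) (n : ℕ) : Prop :=
  (∀ i < n, G.Adj (γ i) (γ (i + 1))) ∧ G.dist (γ 0) (γ n) = n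

/-- The W₁-orientation with respect to a pair of distributions: x → y if some geodesic
with endpoint pair in C(f₀,f₁) traverses the edge (x,y) in that direction. -/
def OrientedEdge (G : SimpleGraph V) (f₀ f₁ : V →₀ ℝ) (x y : V) : Prop :=
  ∃ (γ : ℕ → V) (n k : ℕ), IsGeodesic G γ n ∧
    (γ 0, γ n) ∈ commonSupport G f₀ f₁ ∧ k + 1 ≤ n ∧ γ k = x ∧ γ (k + 1) = y

/-- The Wasserstein distance W₁ on the graph G. -/
def W1 (G : SimpleGraph V) (f₀ f₁ : V →₀ ℝ) : ℝ :=
  sInf {c | ∃ π, IsCoupling f₀ f₁ π ∧ gcost G π = c}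

lemma sum_fst_eq (π : V × V →₀ ℝ) (S T : Finset V) (hs : π.support ⊆ S ×ˢ T) (x : V) :
    (π.sum fun p v => if p.1 = x then v else 0) = ∑ b ∈ T, π (x, b) := by
  rw [Finsupp.sum_of_support_subset π hs _ (fun p _ => by simp)]
  rw [Finset.sum_product]
  have h1 : ∀ a ∈ S, (∑ b ∈ T, if (a, b).1 = x then π (a, b) else 0)
      = if a = x then ∑ b ∈ T, π (a, b) else 0 := by
    intro a _
    by_cases h : a = x <;> simp [h]
  rw [Finset.sum_congr rfl h1, Finset.sum_ite_eq' S x]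
  by_cases hx : x ∈ S
  · simp [hx]
  · simp only [hx, if_false]
    refine (Finset.sum_eq_zero fun b hb => ?_).symm
    by_contra h
    exact hx (Finset.mem_product.1 (hs (Finsupp.mem_support_iff.2 h))).1

lemma sum_snd_eq (π : V × V →₀ ℝ) (S T : Finset V) (hs : π.support ⊆ S ×ˢ T) (y : V) :
    (π.sum fun p v => if p.2 = y then v else 0) = ∑ a ∈ S, π (a, y) := by
  rw [Finsupp.sum_of_support_subset π hs _ (fun p _ => by simp)]
  rw [Finset.sum_product]
  have h1 : ∀ a ∈ S, (∑ b ∈ T, if (a, b).2 = y then π (a, b) else 0)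
      = if y ∈ T then π (a, y) else 0 := by
    intro a _
    rw [← Finset.sum_ite_eq' T y (fun b => π (a, b))]
  rw [Finset.sum_congr rfl h1]
  by_cases hy : y ∈ T
  · simp [hy]
  · simp only [hy, if_false, Finset.sum_const_zero]
    refine (Finset.sum_eq_zero fun a ha => ?_).symm
    by_contra h
    exact hy (Finset.mem_product.1 (hs (Finsupp.mem_support_iff.2 h))).2

lemma IsCoupling.apply_le_fst {f g : V →₀ ℝ} {π : V × V →₀ ℝ} (h : IsCoupling f g π)
    (p : V × V) : π p ≤ f p.1 := by
  by_cases hp : p ∈ π.support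
  · rw [← h.2.1 p.1, Finsupp.sum_of_support_subset π (subset_refl _) _ (fun q _ => by simp)]
    have := Finset.single_le_sum (f := fun q : V × V => if q.1 = p.1 then π q else 0)
      (s := π.support) (fun q _ => by split; exacts [h.1 q, le_rfl]) hp
    simpa using this
  · rw [Finsupp.notMem_support_iff.1 hp, ← h.2.1 p.1,
      Finsupp.sum_of_support_subset π (subset_refl _) _ (fun q _ => by simp)]
    exact Finset.sum_nonneg fun q _ => by split; exacts [h.1 q, le_rfl]

lemma IsCoupling.apply_le_snd {f g : V →₀ ℝ} {π : V × V →₀ ℝ} (h : IsCoupling f g π)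
    (p : V × V) : π p ≤ g p.2 := by
  by_cases hp : p ∈ π.support
  · rw [← h.2.2 p.2, Finsupp.sum_of_support_subset π (subset_refl _) _ (fun q _ => by simp)]
    have := Finset.single_le_sum (f := fun q : V × V => if q.2 = p.2 then π q else 0)
      (s := π.support) (fun q _ => by split; exacts [h.1 q, le_rfl]) hp
    simpa using this
  · rw [Finsupp.notMem_support_iff.1 hp, ← h.2.2 p.2,
      Finsupp.sum_of_support_subset π (subset_refl _) _ (fun q _ => by simp)]
    exact Finset.sum_nonneg fun q _ => by split; exacts [h.1 q, le_rfl]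

lemma IsCoupling.support_subset {f g : V →₀ ℝ} {π : V × V →₀ ℝ} (h : IsCoupling f g π) :
    π.support ⊆ f.support ×ˢ g.support := by
  intro p hp
  have hppos : 0 < π p := lt_of_le_of_ne (h.1 p) (Ne.symm (Finsupp.mem_support_iff.1 hp))
  rw [Finset.mem_product, Finsupp.mem_support_iff, Finsupp.mem_support_iff]
  exact ⟨ne_of_gt (lt_of_lt_of_le hppos (h.apply_le_fst p)),
    ne_of_gt (lt_of_lt_of_le hppos (h.apply_le_snd p))⟩

lemma IsCoupling.marg_fst {f g : V →₀ ℝ} {π : V × V →₀ ℝ} (h : IsCoupling f g π) (x : V) :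
    ∑ b ∈ g.support, π (x, b) = f x := by
  rw [← sum_fst_eq π f.support g.support h.support_subset x, h.2.1]

lemma IsCoupling.marg_snd {f g : V →₀ ℝ} {π : V × V →₀ ℝ} (h : IsCoupling f g π) (y : V) :
    ∑ a ∈ f.support, π (a, y) = g y := by
  rw [← sum_snd_eq π f.support g.support h.support_subset y, h.2.2]

lemma gcost_eq (G : SimpleGraph V) (π : V × V →₀ ℝ) (S : Finset (V × V))
    (hs : π.support ⊆ S) : gcost G π = ∑ p ∈ S, (G.dist p.1 p.2 : ℝ) * π p :=
  Finsupp.sum_of_support_subset π hs _ (fun p _ => by simp)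

lemma gcost_nonneg (G : SimpleGraph V) {π : V × V →₀ ℝ} (h : ∀ p, 0 ≤ π p) :
    0 ≤ gcost G π :=
  Finset.sum_nonneg fun p _ => mul_nonneg (by positivity) (h p)

lemma glue (G : SimpleGraph V) (hconn : G.Connected) {f g h : V →₀ ℝ}
    {π₁ π₂ : V × V →₀ ℝ} (h₁ : IsCoupling f g π₁) (h₂ : IsCoupling g h π₂) :
    ∃ σ : V × V →₀ ℝ, IsCoupling f h σ ∧ gcost G σ ≤ gcost G π₁ + gcost G π₂ ∧
      (gcost G σ = gcost G π₁ + gcost G π₂ →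
        ∀ a m c, 0 < π₁ (a, m) → 0 < π₂ (m, c) →
          0 < σ (a, c) ∧ (G.dist a c : ℝ) = G.dist a m + G.dist m c) := by
  classical
  set A := f.support with hA
  set B := g.support with hB
  set C := h.support with hC
  set w : V → V → V → ℝ := fun a m c => π₁ (a, m) * π₂ (m, c) / g m with hwdef
  have hg0 : ∀ m, 0 ≤ g m := by
    intro m
    rw [← h₂.marg_fst m]
    exact Finset.sum_nonneg fun c _ => h₂.1 (m, c)
  have hw0 : ∀ a m c, 0 ≤ w a m c := fun a m c =>
    div_nonneg (mul_nonneg (h₁.1 (a, m)) (h₂.1 (m, c))) (hg0 m)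
  have hsupp : ∀ p : V × V, (∑ m ∈ B, w p.1 m p.2) ≠ 0 → p ∈ A ×ˢ C := by
    intro p hp
    obtain ⟨m, _, hm⟩ := Finset.exists_ne_zero_of_sum_ne_zero hp
    have h1 : π₁ (p.1, m) ≠ 0 := by
      intro h0; apply hm; simp [hwdef, h0]
    have h2 : π₂ (m, p.2) ≠ 0 := by
      intro h0; apply hm; simp [hwdef, h0]
    have hp1 := h₁.support_subset (Finsupp.mem_support_iff.2 h1)
    have hp2 := h₂.support_subset (Finsupp.mem_support_iff.2 h2)
    rw [Finset.mem_product] at hp1 hp2 ⊢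
    exact ⟨hp1.1, hp2.2⟩
  set σ : V × V →₀ ℝ := Finsupp.onFinset (A ×ˢ C) (fun p => ∑ m ∈ B, w p.1 m p.2) hsupp
    with hσdef
  have hσapp : ∀ a c, σ (a, c) = ∑ m ∈ B, w a m c := fun a c => rfl
  have hσ0 : ∀ p, 0 ≤ σ p := fun p => Finset.sum_nonneg fun m _ => hw0 p.1 m p.2
  have hσsupp : σ.support ⊆ A ×ˢ C := Finsupp.support_onFinset_subset
  have hsum_c : ∀ a m, m ∈ B → ∑ c ∈ C, w a m c = π₁ (a, m) := by
    intro a m hm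
    have hgm : g m ≠ 0 := Finsupp.mem_support_iff.1 hm
    simp only [hwdef]
    rw [← Finset.sum_div, ← Finset.mul_sum, h₂.marg_fst m, mul_div_cancel_right₀ _ hgm]
  have hsum_a : ∀ m c, m ∈ B → ∑ a ∈ A, w a m c = π₂ (m, c) := by
    intro m c hm
    have hgm : g m ≠ 0 := Finsupp.mem_support_iff.1 hm
    simp only [hwdef]
    rw [← Finset.sum_div, ← Finset.sum_mul, h₁.marg_snd m, mul_div_cancel_left₀ _ hgm]
  have hcoup : IsCoupling f h σ := by
    refine ⟨hσ0, fun x => ?_, fun y => ?_⟩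
    · rw [sum_fst_eq σ A C hσsupp x]
      calc ∑ c ∈ C, σ (x, c) = ∑ c ∈ C, ∑ m ∈ B, w x m c := by
            exact Finset.sum_congr rfl fun c _ => hσapp x c
        _ = ∑ m ∈ B, ∑ c ∈ C, w x m c := Finset.sum_comm
        _ = ∑ m ∈ B, π₁ (x, m) := Finset.sum_congr rfl fun m hm => hsum_c x m hm
        _ = f x := h₁.marg_fst x
    · rw [sum_snd_eq σ A C hσsupp y]
      calc ∑ a ∈ A, σ (a, y) = ∑ a ∈ A, ∑ m ∈ B, w a m y := by
            exact Finset.sum_congr rfl fun a _ => hσapp a y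
        _ = ∑ m ∈ B, ∑ a ∈ A, w a m y := Finset.sum_comm
        _ = ∑ m ∈ B, π₂ (m, y) := Finset.sum_congr rfl fun m hm => hsum_a m y hm
        _ = h y := h₂.marg_snd y
  have hcσ : gcost G σ = ∑ a ∈ A, ∑ m ∈ B, ∑ c ∈ C, (G.dist a c : ℝ) * w a m c := by
    rw [gcost_eq G σ _ hσsupp, Finset.sum_product]
    refine Finset.sum_congr rfl fun a _ => ?_
    calc ∑ c ∈ C, (G.dist a c : ℝ) * σ (a, c)
        = ∑ c ∈ C, ∑ m ∈ B, (G.dist a c : ℝ) * w a m c := by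
          refine Finset.sum_congr rfl fun c _ => ?_
          rw [hσapp, Finset.mul_sum]
      _ = ∑ m ∈ B, ∑ c ∈ C, (G.dist a c : ℝ) * w a m c := Finset.sum_comm
  have hT1 : ∑ a ∈ A, ∑ m ∈ B, ∑ c ∈ C, (G.dist a m : ℝ) * w a m c = gcost G π₁ := by
    rw [gcost_eq G π₁ _ h₁.support_subset, Finset.sum_product]
    refine Finset.sum_congr rfl fun a _ => Finset.sum_congr rfl fun m hm => ?_
    rw [← Finset.mul_sum, hsum_c a m hm]
  have hT2 : ∑ a ∈ A, ∑ m ∈ B, ∑ c ∈ C, (G.dist m c : ℝ) * w a m c = gcost G π₂ := by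
    rw [gcost_eq G π₂ _ h₂.support_subset, Finset.sum_product]
    rw [Finset.sum_comm]
    refine Finset.sum_congr rfl fun m hm => ?_
    rw [Finset.sum_comm]
    refine Finset.sum_congr rfl fun c _ => ?_
    rw [← Finset.mul_sum, hsum_a m c hm]
  set D : ℝ := ∑ a ∈ A, ∑ m ∈ B, ∑ c ∈ C,
    (((G.dist a m : ℝ) + G.dist m c) - G.dist a c) * w a m c with hDdef
  have hslack0 : ∀ a m c, 0 ≤ (((G.dist a m : ℝ) + G.dist m c) - G.dist a c) := by
    intro a m c
    have := hconn.dist_triangle (u := a) (v := m) (w := c)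
    have : (G.dist a c : ℝ) ≤ (G.dist a m : ℝ) + G.dist m c := by exact_mod_cast this
    linarith
  have hterm0 : ∀ a m c, 0 ≤ (((G.dist a m : ℝ) + G.dist m c) - G.dist a c) * w a m c :=
    fun a m c => mul_nonneg (hslack0 a m c) (hw0 a m c)
  have hD : D = gcost G π₁ + gcost G π₂ - gcost G σ := by
    rw [← hT1, ← hT2, hcσ, hDdef]
    rw [← Finset.sum_add_distrib, ← Finset.sum_sub_distrib]
    refine Finset.sum_congr rfl fun a _ => ?_
    rw [← Finset.sum_add_distrib, ← Finset.sum_sub_distrib]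
    refine Finset.sum_congr rfl fun m _ => ?_
    rw [← Finset.sum_add_distrib, ← Finset.sum_sub_distrib]
    refine Finset.sum_congr rfl fun c _ => ?_
    ring
  have hD0 : 0 ≤ D :=
    Finset.sum_nonneg fun a _ => Finset.sum_nonneg fun m _ =>
      Finset.sum_nonneg fun c _ => hterm0 a m c
  refine ⟨σ, hcoup, by linarith, ?_⟩
  intro heq a m c hp1 hp2
  have hmem1 := h₁.support_subset (Finsupp.mem_support_iff.2 (ne_of_gt hp1))
  have hmem2 := h₂.support_subset (Finsupp.mem_support_iff.2 (ne_of_gt hp2))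
  rw [Finset.mem_product] at hmem1 hmem2
  have haA : a ∈ A := hmem1.1
  have hmB : m ∈ B := hmem1.2
  have hcC : c ∈ C := hmem2.2
  have hgm : 0 < g m := lt_of_le_of_ne (hg0 m) (Ne.symm (Finsupp.mem_support_iff.1 hmB))
  have hwpos : 0 < w a m c := div_pos (mul_pos hp1 hp2) hgm
  constructor
  · rw [hσapp]
    calc (0:ℝ) < w a m c := hwpos
      _ ≤ ∑ m' ∈ B, w a m' c := Finset.single_le_sum (fun m' _ => hw0 a m' c) hmB
  · have hDzero : D = 0 := by rw [hD, heq]; ring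
    have hsum0 : (∑ a ∈ A, ∑ m ∈ B, ∑ c ∈ C,
        (((G.dist a m : ℝ) + G.dist m c) - G.dist a c) * w a m c) = 0 := by
      rw [← hDdef]; exact hDzero
    have l1 := (Finset.sum_eq_zero_iff_of_nonneg (fun a' _ =>
      Finset.sum_nonneg fun m' _ => Finset.sum_nonneg fun c' _ => hterm0 a' m' c')).1
      hsum0 a haA
    have l2 := (Finset.sum_eq_zero_iff_of_nonneg (fun m' _ =>
      Finset.sum_nonneg fun c' _ => hterm0 a m' c')).1 l1 m hmB
    have l3 := (Finset.sum_eq_zero_iff_of_nonneg (fun c' _ => hterm0 a m c')).1 l2 c hcC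
    have := mul_eq_zero.1 l3
    rcases this with h0 | h0
    · linarith [sub_eq_zero.1 h0]
    · exact absurd h0 (ne_of_gt hwpos)

lemma IsProb.le_one {f : V →₀ ℝ} (hf : IsProb f) (x : V) : f x ≤ 1 := by
  by_cases hx : x ∈ f.support
  · rw [← hf.2]
    exact Finset.single_le_sum (fun a _ => hf.1 a) hx
  · rw [Finsupp.notMem_support_iff.1 hx]
    exact zero_le_one

lemma sum_support_eq_one {f : V →₀ ℝ} (hf : IsProb f) : ∑ a ∈ f.support, f a = 1 := hf.2

lemma exists_optimalCoupling (G : SimpleGraph V) {f g : V →₀ ℝ}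
    (hf : IsProb f) (hg : IsProb g) :
    ∃ π, IsOptimalCoupling G f g π := by
  classical
  set A := f.support with hA
  set B := g.support with hB
  set E : Finset (V × V) := A ×ˢ B with hE
  set ext : (↥E → ℝ) → (V × V →₀ ℝ) :=
    fun u => Finsupp.indicator E (fun p hp => u ⟨p, hp⟩) with hext
  have hext_mem : ∀ (u : ↥E → ℝ) (i : ↥E), ext u (i : V × V) = u i := by
    intro u i
    simp [hext, Finsupp.indicator_apply, i.2]
  have hext_not : ∀ (u : ↥E → ℝ) (p : V × V), p ∉ E → ext u p = 0 := by
    intro u p hp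
    simp [hext, Finsupp.indicator_apply, hp]
  have hext_supp : ∀ u, (ext u).support ⊆ E := by
    intro u p hp
    by_contra hpE
    exact (Finsupp.mem_support_iff.1 hp) (hext_not u p hpE)
  -- translation of the marginal conditions
  have htrans1 : ∀ (u : ↥E → ℝ) (x : V),
      ((ext u).sum fun p v => if p.1 = x then v else 0)
        = ∑ i ∈ E.attach, (if (i : V × V).1 = x then u i else 0) := by
    intro u x
    rw [Finsupp.sum_of_support_subset (ext u) (hext_supp u) _ (fun q _ => by simp),
      ← Finset.sum_attach E (fun p => if p.1 = x then ext u p else 0)]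
    exact Finset.sum_congr rfl fun i _ => by rw [hext_mem u i]
  have htrans2 : ∀ (u : ↥E → ℝ) (y : V),
      ((ext u).sum fun p v => if p.2 = y then v else 0)
        = ∑ i ∈ E.attach, (if (i : V × V).2 = y then u i else 0) := by
    intro u y
    rw [Finsupp.sum_of_support_subset (ext u) (hext_supp u) _ (fun q _ => by simp),
      ← Finset.sum_attach E (fun p => if p.2 = y then ext u p else 0)]
    exact Finset.sum_congr rfl fun i _ => by rw [hext_mem u i]
  set K : Set (↥E → ℝ) := {u | IsCoupling f g (ext u)} with hK
  have hKmem : ∀ u, u ∈ K ↔ ((∀ i, 0 ≤ u i) ∧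
      (∀ x, ∑ i ∈ E.attach, (if (i : V × V).1 = x then u i else 0) = f x) ∧
      (∀ y, ∑ i ∈ E.attach, (if (i : V × V).2 = y then u i else 0) = g y)) := by
    intro u
    constructor
    · rintro ⟨hnn, hm1, hm2⟩
      refine ⟨fun i => by rw [← hext_mem u i]; exact hnn i,
        fun x => by rw [← htrans1 u x]; exact hm1 x,
        fun y => by rw [← htrans2 u y]; exact hm2 y⟩
    · rintro ⟨hnn, hm1, hm2⟩
      refine ⟨fun p => ?_, fun x => by rw [htrans1 u x]; exact hm1 x,
        fun y => by rw [htrans2 u y]; exact hm2 y⟩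
      by_cases hp : p ∈ E
      · rw [show p = ((⟨p, hp⟩ : ↥E) : V × V) from rfl, hext_mem u ⟨p, hp⟩]
        exact hnn _
      · rw [hext_not u p hp]
  -- K is closed
  have hclosed : IsClosed K := by
    have : K = (⋂ i : ↥E, {u : ↥E → ℝ | 0 ≤ u i}) ∩
        ((⋂ x : V, {u : ↥E → ℝ |
            ∑ i ∈ E.attach, (if (i : V × V).1 = x then u i else 0) = f x}) ∩
         (⋂ y : V, {u : ↥E → ℝ |
            ∑ i ∈ E.attach, (if (i : V × V).2 = y then u i else 0) = g y})) := by
      ext u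
      simp only [Set.mem_inter_iff, Set.mem_iInter, Set.mem_setOf_eq, hKmem u]
    rw [this]
    have hcont1 : ∀ x : V, Continuous fun u : ↥E → ℝ =>
        ∑ i ∈ E.attach, (if (i : V × V).1 = x then u i else 0) := by
      intro x
      apply continuous_finset_sum
      intro i _
      by_cases hc : (i : V × V).1 = x
      · simp only [if_pos hc]; exact continuous_apply i
      · simp only [if_neg hc]; exact continuous_const
    have hcont2 : ∀ y : V, Continuous fun u : ↥E → ℝ =>
        ∑ i ∈ E.attach, (if (i : V × V).2 = y then u i else 0) := by
      intro y
      apply continuous_finset_sum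
      intro i _
      by_cases hc : (i : V × V).2 = y
      · simp only [if_pos hc]; exact continuous_apply i
      · simp only [if_neg hc]; exact continuous_const
    refine IsClosed.inter (isClosed_iInter fun i =>
        isClosed_le continuous_const (continuous_apply i))
      (IsClosed.inter (isClosed_iInter fun x => isClosed_eq (hcont1 x) continuous_const)
        (isClosed_iInter fun y => isClosed_eq (hcont2 y) continuous_const))
  -- K is contained in a compact box
  have hsub : K ⊆ Set.univ.pi fun _ : ↥E => Set.Icc (0 : ℝ) 1 := by
    intro u hu
    rw [Set.mem_pi]
    intro i _
    have hc : IsCoupling f g (ext u) := hu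
    refine ⟨by rw [← hext_mem u i]; exact hc.1 _, ?_⟩
    have h1 : u i ≤ f (i : V × V).1 := by
      rw [← hext_mem u i]; exact hc.apply_le_fst _
    exact h1.trans (hf.le_one _)
  have hcompact : IsCompact K :=
    IsCompact.of_isClosed_subset (isCompact_univ_pi fun _ => isCompact_Icc) hclosed hsub
  -- K is nonempty: the product coupling
  have hne : K.Nonempty := by
    refine ⟨fun i => f (i : V × V).1 * g (i : V × V).2, (hKmem _).2 ⟨?_, ?_, ?_⟩⟩
    · exact fun i => mul_nonneg (hf.1 _) (hg.1 _)
    · intro x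
      by_cases hx : x ∈ A
      · rw [Finset.sum_attach E (fun p => if p.1 = x then f p.1 * g p.2 else 0)]
        rw [hE, Finset.sum_product]
        have : ∀ a ∈ A, (∑ b ∈ B, if (a, b).1 = x then f (a, b).1 * g (a, b).2 else 0)
            = if a = x then f a * (∑ b ∈ B, g b) else 0 := by
          intro a _
          by_cases hax : a = x
          · simp only [hax, if_true, Finset.mul_sum]
          · simp [hax]
        rw [Finset.sum_congr rfl this, Finset.sum_ite_eq' A x, if_pos hx,
          sum_support_eq_one hg, mul_one]
      · have hfx : f x = 0 := Finsupp.notMem_support_iff.1 hx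
        rw [hfx]
        refine Finset.sum_eq_zero fun i _ => ?_
        have : (i : V × V).1 ≠ x := by
          intro hcontra
          have h2 : (↑i : V × V) ∈ A ×ˢ B := i.2
          rw [Finset.mem_product] at h2
          apply hx; rw [← hcontra]; exact h2.1
        rw [if_neg this]
    · intro y
      by_cases hy : y ∈ B
      · rw [Finset.sum_attach E (fun p => if p.2 = y then f p.1 * g p.2 else 0)]
        rw [hE, Finset.sum_product]
        have : ∀ a ∈ A, (∑ b ∈ B, if (a, b).2 = y then f (a, b).1 * g (a, b).2 else 0)
            = f a * g y := by
          intro a _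
          rw [show (∑ b ∈ B, if (a, b).2 = y then f (a, b).1 * g (a, b).2 else 0)
              = ∑ b ∈ B, if b = y then f a * g b else 0 from rfl,
            Finset.sum_ite_eq' B y (fun b => f a * g b), if_pos hy]
        rw [Finset.sum_congr rfl this, ← Finset.sum_mul, sum_support_eq_one hf, one_mul]
      · have hgy : g y = 0 := Finsupp.notMem_support_iff.1 hy
        rw [hgy]
        refine Finset.sum_eq_zero fun i _ => ?_
        have : (i : V × V).2 ≠ y := by
          intro hcontra
          have h2 : (↑i : V × V) ∈ A ×ˢ B := i.2
          rw [Finset.mem_product] at h2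
          apply hy; rw [← hcontra]; exact h2.2
        rw [if_neg this]
  -- the cost function
  set φ : (↥E → ℝ) → ℝ :=
    fun u => ∑ i ∈ E.attach, (G.dist (i : V × V).1 (i : V × V).2 : ℝ) * u i with hφ
  have hφcont : Continuous φ :=
    continuous_finset_sum _ fun i _ => continuous_const.mul (continuous_apply i)
  have hφgcost : ∀ u, gcost G (ext u) = φ u := by
    intro u
    rw [gcost_eq G (ext u) E (hext_supp u),
      ← Finset.sum_attach E (fun p => (G.dist p.1 p.2 : ℝ) * ext u p)]
    exact Finset.sum_congr rfl fun i _ => by rw [hext_mem u i]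
  obtain ⟨u₀, hu₀K, hmin⟩ := hcompact.exists_isMinOn hne hφcont.continuousOn
  refine ⟨ext u₀, hu₀K, ?_⟩
  intro π' hπ'
  set u' : ↥E → ℝ := fun i => π' (i : V × V) with hu'
  have hextu' : ext u' = π' := by
    ext p
    by_cases hp : p ∈ E
    · rw [show p = ((⟨p, hp⟩ : ↥E) : V × V) from rfl, hext_mem u' ⟨p, hp⟩]
    · rw [hext_not u' p hp]
      by_contra hne'
      exact hp (hπ'.support_subset (Finsupp.mem_support_iff.2 fun h0 => hne' h0.symm))
  have hu'K : u' ∈ K := by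
    rw [hK, Set.mem_setOf_eq, hextu']
    exact hπ'
  calc gcost G (ext u₀) = φ u₀ := hφgcost u₀
    _ ≤ φ u' := isMinOn_iff.1 hmin u' hu'K
    _ = gcost G (ext u') := (hφgcost u').symm
    _ = gcost G π' := by rw [hextu']

lemma W1_bddBelow (G : SimpleGraph V) (f g : V →₀ ℝ) :
    BddBelow {c | ∃ π, IsCoupling f g π ∧ gcost G π = c} := by
  refine ⟨0, ?_⟩
  rintro c ⟨π, hπ, rfl⟩
  exact gcost_nonneg G hπ.1

lemma W1_le_gcost (G : SimpleGraph V) {f g : V →₀ ℝ} {π : V × V →₀ ℝ}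
    (h : IsCoupling f g π) : W1 G f g ≤ gcost G π :=
  csInf_le (W1_bddBelow G f g) ⟨π, h, rfl⟩

lemma IsOptimalCoupling.w1_eq {G : SimpleGraph V} {f g : V →₀ ℝ} {π : V × V →₀ ℝ}
    (h : IsOptimalCoupling G f g π) : W1 G f g = gcost G π := by
  refine le_antisymm (W1_le_gcost G h.1) (le_csInf ⟨gcost G π, π, h.1, rfl⟩ ?_)
  rintro c ⟨π', hπ', rfl⟩
  exact h.2 π' hπ'

lemma exists_walk_of_chain (G : SimpleGraph V) :
    ∀ (n : ℕ) (γ : ℕ → V), (∀ i < n, G.Adj (γ i) (γ (i + 1))) →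
      ∃ w : G.Walk (γ 0) (γ n), w.length = n ∧ ∀ i ≤ n, w.getVert i = γ i := by
  intro n
  induction n with
  | zero =>
    intro γ _
    refine ⟨SimpleGraph.Walk.nil, rfl, fun i hi => ?_⟩
    interval_cases i
    exact SimpleGraph.Walk.getVert_zero _
  | succ n ih =>
    intro γ hadj
    obtain ⟨w, hw1, hw2⟩ := ih (fun i => γ (i + 1)) (fun i hi => hadj (i + 1) (by omega))
    refine ⟨SimpleGraph.Walk.cons (hadj 0 (Nat.succ_pos n)) w, by simp [hw1], ?_⟩
    intro i hi
    cases i with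
    | zero => exact SimpleGraph.Walk.getVert_zero _
    | succ j =>
      rw [SimpleGraph.Walk.getVert_cons_succ]
      exact hw2 j (by omega)

theorem W1_orientation_restriction
    (G : SimpleGraph V) (hconn : G.Connected) [G.LocallyFinite]
    (f : ℝ → V →₀ ℝ)
    (hprob : ∀ t ∈ Set.Icc (0 : ℝ) 1, IsProb (f t))
    (hW : ∀ s t : ℝ, 0 ≤ s → s ≤ t → t ≤ 1 → W1 G (f s) (f t) = (t - s) * W1 G (f 0) (f 1))
    (s t : ℝ) (hs : 0 ≤ s) (hst : s ≤ t) (ht : t ≤ 1)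
    (x y : V) (hxy : OrientedEdge G (f s) (f t) x y) :
    OrientedEdge G (f 0) (f 1) x y := by
  obtain ⟨γ, n, k, hgeo, ⟨π₂, hπ₂opt, hπ₂pos⟩, hkn, hx, hy⟩ := hxy
  have hs01 : s ∈ Set.Icc (0 : ℝ) 1 := ⟨hs, hst.trans ht⟩
  have ht01 : t ∈ Set.Icc (0 : ℝ) 1 := ⟨hs.trans hst, ht⟩
  obtain ⟨π₁, hπ₁⟩ := exists_optimalCoupling G (hprob 0 ⟨le_refl 0, zero_le_one⟩)
    (hprob s hs01)
  obtain ⟨π₃, hπ₃⟩ := exists_optimalCoupling G (hprob t ht01)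
    (hprob 1 ⟨zero_le_one, le_refl 1⟩)
  obtain ⟨τ, hτc, hτle, hτeq⟩ := glue G hconn hπ₁.1 hπ₂opt.1
  obtain ⟨σ, hσc, hσle, hσeq⟩ := glue G hconn hτc hπ₃.1
  set W := W1 G (f 0) (f 1) with hWdef
  have e1 : gcost G π₁ = s * W := by
    rw [← hπ₁.w1_eq, hW 0 s (le_refl 0) hs hs01.2, sub_zero, hWdef]
  have e2 : gcost G π₂ = (t - s) * W := by
    rw [← hπ₂opt.w1_eq, hW s t hs hst ht, hWdef]
  have e3 : gcost G π₃ = (1 - t) * W := by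
    rw [← hπ₃.w1_eq, hW t 1 (hs.trans hst) ht (le_refl 1), hWdef]
  have hWσ : W ≤ gcost G σ := W1_le_gcost G hσc
  have hWτ : t * W ≤ gcost G τ := by
    have h' := W1_le_gcost G hτc
    rw [hW 0 t (le_refl 0) (hs.trans hst) ht, sub_zero] at h'
    exact h'
  have hsum : gcost G π₁ + gcost G π₂ + gcost G π₃ = W := by
    rw [e1, e2, e3]; ring
  have hτeq' : gcost G τ = gcost G π₁ + gcost G π₂ := by
    refine le_antisymm hτle ?_
    have h' : s * W + (t - s) * W = t * W := by ring
    rw [e1, e2]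
    linarith
  have hσeq' : gcost G σ = gcost G τ + gcost G π₃ := by
    refine le_antisymm hσle ?_
    rw [hτeq']
    linarith
  have hσW : gcost G σ = W := by rw [hσeq', hτeq']; linarith
  have hσopt : IsOptimalCoupling G (f 0) (f 1) σ := by
    refine ⟨hσc, fun π' hπ' => ?_⟩
    rw [hσW]
    exact W1_le_gcost G hπ'
  -- find endpoints a, b
  have hfs : 0 < f s (γ 0) := lt_of_lt_of_le hπ₂pos (hπ₂opt.1.apply_le_fst (γ 0, γ n))
  have hft : 0 < f t (γ n) := lt_of_lt_of_le hπ₂pos (hπ₂opt.1.apply_le_snd (γ 0, γ n))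
  obtain ⟨a, _, hane⟩ := Finset.exists_ne_zero_of_sum_ne_zero
    (s := (f 0).support) (f := fun a => π₁ (a, γ 0))
    (by rw [hπ₁.1.marg_snd (γ 0)]; exact ne_of_gt hfs)
  have hapos : 0 < π₁ (a, γ 0) := lt_of_le_of_ne (hπ₁.1.1 _) (Ne.symm hane)
  obtain ⟨b, _, hbne⟩ := Finset.exists_ne_zero_of_sum_ne_zero
    (s := (f 1).support) (f := fun b => π₃ (γ n, b))
    (by rw [hπ₃.1.marg_fst (γ n)]; exact ne_of_gt hft)
  have hbpos : 0 < π₃ (γ n, b) := lt_of_le_of_ne (hπ₃.1.1 _) (Ne.symm hbne)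
  obtain ⟨hτpos, hdτ⟩ := hτeq hτeq' a (γ 0) (γ n) hapos hπ₂pos
  obtain ⟨hσpos, hdσ⟩ := hσeq hσeq' a (γ n) b hτpos hbpos
  -- the distance identity
  have hdn : (G.dist (γ 0) (γ n) : ℝ) = n := by exact_mod_cast hgeo.2
  have dab : (G.dist a b : ℝ) = G.dist a (γ 0) + n + G.dist (γ n) b := by
    rw [hdσ, hdτ, hdn]
  have dabN : G.dist a b = G.dist a (γ 0) + n + G.dist (γ n) b := by exact_mod_cast dab
  -- build the geodesic
  obtain ⟨p, hp⟩ := hconn.exists_walk_length_eq_dist a (γ 0)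
  obtain ⟨q, hq⟩ := hconn.exists_walk_length_eq_dist (γ n) b
  obtain ⟨wγ, hwγlen, hwγv⟩ := exists_walk_of_chain G n γ hgeo.1
  set w := p.append (wγ.append q) with hwdef
  have hlen : w.length = G.dist a (γ 0) + n + G.dist (γ n) b := by
    rw [hwdef, SimpleGraph.Walk.length_append, SimpleGraph.Walk.length_append,
      hp, hwγlen, hq]
    ring
  have hmid : ∀ j ≤ n, w.getVert (p.length + j) = γ j := by
    intro j hj
    rw [hwdef, SimpleGraph.Walk.getVert_append]
    have h1 : ¬(p.length + j < p.length) := by omega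
    have h2 : p.length + j - p.length = j := by omega
    rw [if_neg h1, h2, SimpleGraph.Walk.getVert_append]
    by_cases hjn : j < wγ.length
    · rw [if_pos hjn]
      exact hwγv j hj
    · rw [if_neg hjn]
      have hjeq : j = n := by omega
      have h3 : j - wγ.length = 0 := by omega
      rw [h3, SimpleGraph.Walk.getVert_zero, hjeq]
  refine ⟨w.getVert, w.length, p.length + k, ⟨fun i hi => w.adj_getVert_succ hi, ?_⟩,
    ?_, ?_, ?_, ?_⟩
  · rw [SimpleGraph.Walk.getVert_zero, SimpleGraph.Walk.getVert_length, dabN, hlen]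
  · rw [SimpleGraph.Walk.getVert_zero, SimpleGraph.Walk.getVert_length]
    exact ⟨σ, hσopt, hσpos⟩
  · have : w.length = p.length + n + q.length := by
      rw [hwdef, SimpleGraph.Walk.length_append, SimpleGraph.Walk.length_append, hwγlen]
      ring
    omega
  · rw [hmid k (by omega)]
    exact hx
  · rw [show p.length + k + 1 = p.length + (k + 1) by ring, hmid (k + 1) hkn]
    exact hy
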